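/- Every computable graph has a computable copy in which the set of isolated vertices is computable. -/

import Mathlib

namespace Stmt14

/-- Any predicate on ℕ with finitely many witnesses is computable. -/
theorem computablePred_of_finite {p : ℕ → Prop} (h : {x | p x}.Finite) : ComputablePred p := by
  classical
  obtain ⟨l, hl⟩ : ∃ l : List ℕ, ∀ x, p x ↔ x ∈ l :=
    ⟨h.toFinset.toList, fun x => by simp⟩
  rw [ComputablePred.computable_iff]
  refine ⟨fun x => decide (l.idxOf x < l.length), ?_, ?_⟩
  · exact ((Primrec.nat_lt.decide.comp (Primrec.list_idxOf₁ l) (Primrec.const l.length))).to_comp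
  · funext x
    simp [hl x, List.idxOf_lt_length_iff]

def step (c : ℕ × ℕ → Bool) (k : ℕ) (l : List ℕ) : List ℕ :=
  l ++ (if c (Nat.unpair k) = true ∧ (Nat.unpair k).1 ∉ l then [(Nat.unpair k).1] else [])

theorem computable_step {c : ℕ × ℕ → Bool} (hc : Computable c) :
    Computable fun p : ℕ × List ℕ => step c p.1 p.2 := by
  classical
  have hx : Computable fun p : ℕ × List ℕ => (Nat.unpair p.1).1 :=
    (Primrec.fst.comp (Primrec.unpair.comp Primrec.fst)).to_comp
  have hmem : Computable fun p : ℕ × List ℕ =>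
      decide (p.2.idxOf (Nat.unpair p.1).1 < p.2.length) :=
    Primrec.to_comp <| Primrec.nat_lt.decide.comp
      (Primrec.list_idxOf.comp
        (Primrec.fst.comp (Primrec.unpair.comp Primrec.fst)) Primrec.snd)
      (Primrec.list_length.comp Primrec.snd)
  have hcc : Computable fun p : ℕ × List ℕ => c (Nat.unpair p.1) :=
    hc.comp (Primrec.unpair.comp Primrec.fst).to_comp
  have hb : Computable fun p : ℕ × List ℕ =>
      (c (Nat.unpair p.1) && !(decide (p.2.idxOf (Nat.unpair p.1).1 < p.2.length))) :=
    Primrec.and.to_comp.comp hcc (Primrec.not.to_comp.comp hmem)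
  have happ : Computable fun p : ℕ × List ℕ => p.2 ++ [(Nat.unpair p.1).1] :=
    Primrec.list_concat.to_comp.comp Computable.snd hx
  have h1 : Computable fun p : ℕ × List ℕ =>
      cond (c (Nat.unpair p.1) && !(decide (p.2.idxOf (Nat.unpair p.1).1 < p.2.length)))
        (p.2 ++ [(Nat.unpair p.1).1]) p.2 :=
    Computable.cond hb happ Computable.snd
  refine h1.of_eq fun p => ?_
  unfold step
  by_cases h1 : c (Nat.unpair p.1) = true <;>
    by_cases h2 : (Nat.unpair p.1).1 ∈ p.2 <;>
      simp [h1, h2, List.idxOf_lt_length_iff]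

end Stmt14

namespace Stmt14

def L (c : ℕ × ℕ → Bool) : ℕ → List ℕ
  | 0 => []
  | k + 1 => step c k (L c k)

theorem computable_L {c : ℕ × ℕ → Bool} (hc : Computable c) : Computable (L c) := by
  have h := Computable.nat_rec (Computable.id) (Computable.const ([] : List ℕ))
    ((computable_step hc).comp Computable.snd).to₂
  refine h.of_eq fun k => ?_
  induction k with
  | zero => rfl
  | succ n ih => exact congrArg (step c n) ih

theorem L_prefix {c} {k m : ℕ} (h : k ≤ m) : L c k <+: L c m := by
  induction m with
  | zero => cases Nat.le_zero.1 h; exact List.prefix_refl _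
  | succ n ih =>
    rcases Nat.lt_or_ge k (n+1) with h' | h'
    · exact (ih (Nat.lt_succ_iff.1 h')).trans ⟨_, rfl⟩
    · cases Nat.le_antisymm h h'; exact List.prefix_refl _

theorem mem_L {c} {k x : ℕ} (h : x ∈ L c k) : ∃ y, c (x, y) = true := by
  induction k with
  | zero => cases h
  | succ n ih =>
    rcases List.mem_append.1 h with h' | h'
    · exact ih h'
    · split at h'
      · rename_i hcond
        rcases List.mem_singleton.1 h' with rfl
        exact ⟨(Nat.unpair n).2, by rw [← hcond.1]⟩
      · cases h'

theorem nodup_L {c} (k : ℕ) : (L c k).Nodup := by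
  induction k with
  | zero => exact List.nodup_nil
  | succ n ih =>
    unfold L step
    split
    · rename_i hcond
      simpa [List.nodup_append] using ⟨ih, fun a ha h => hcond.2 (h ▸ ha)⟩
    · simpa using ih

theorem mem_L_of_c {c} {x y : ℕ} (h : c (x, y) = true) : x ∈ L c (Nat.pair x y + 1) := by
  by_cases hx : x ∈ L c (Nat.pair x y)
  · exact List.mem_append.2 (Or.inl hx)
  · refine List.mem_append.2 (Or.inr ?_)
    rw [show (if c (Nat.unpair (Nat.pair x y)) = true ∧
        (Nat.unpair (Nat.pair x y)).1 ∉ L c (Nat.pair x y) then [(Nat.unpair (Nat.pair x y)).1]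
        else []) = [x] from by simp [Nat.unpair_pair, h, hx]]
    simp

end Stmt14

namespace Stmt14

variable {c : ℕ × ℕ → Bool}

noncomputable def stage (c : ℕ × ℕ → Bool) (hinf : ∀ n, ∃ k, n < (L c k).length) (n : ℕ) : ℕ :=
  Nat.find (hinf n)

noncomputable def fenum (c : ℕ × ℕ → Bool) (hinf : ∀ n, ∃ k, n < (L c k).length) (n : ℕ) : ℕ :=
  (L c (stage c hinf n)).getD n 0

variable {hinf : ∀ n, ∃ k, n < (L c k).length}

theorem lt_length_stage (n : ℕ) : n < (L c (stage c hinf n)).length := Nat.find_spec (hinf n)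

theorem getD_stable {n k : ℕ} (h : stage c hinf n ≤ k) :
    (L c k).getD n 0 = fenum c hinf n := by
  have hp : L c (stage c hinf n) <+: L c k := L_prefix h
  have hn : n < (L c (stage c hinf n)).length := lt_length_stage n
  have hn' : n < (L c k).length := lt_of_lt_of_le hn hp.length_le
  unfold fenum
  rw [List.getD_eq_getElem _ _ hn', List.getD_eq_getElem _ _ hn]
  exact (hp.getElem hn).symm

theorem fenum_mem (n : ℕ) : fenum c hinf n ∈ L c (stage c hinf n) := by
  have hn : n < (L c (stage c hinf n)).length := lt_length_stage n
  rw [fenum, List.getD_eq_getElem _ _ hn]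
  exact List.getElem_mem hn

theorem fenum_spec (n : ℕ) : ∃ y, c (fenum c hinf n, y) = true := mem_L (fenum_mem n)

theorem fenum_inj : Function.Injective (fenum c hinf) := by
  intro m n h
  set k := max (stage c hinf m) (stage c hinf n) with hk
  have hm : m < (L c k).length :=
    lt_of_lt_of_le (lt_length_stage m) (L_prefix (le_max_left _ _)).length_le
  have hn : n < (L c k).length :=
    lt_of_lt_of_le (lt_length_stage n) (L_prefix (le_max_right _ _)).length_le
  have e1 : (L c k).getD m 0 = fenum c hinf m := getD_stable (le_max_left _ _)
  have e2 : (L c k).getD n 0 = fenum c hinf n := getD_stable (le_max_right _ _)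
  rw [List.getD_eq_getElem _ _ hm] at e1
  rw [List.getD_eq_getElem _ _ hn] at e2
  have : (L c k)[m] = (L c k)[n] := by rw [e1, e2, h]
  exact (List.Nodup.getElem_inj_iff (nodup_L k)).1 this

theorem fenum_surj {x : ℕ} (hx : ∃ y, c (x, y) = true) : ∃ n, fenum c hinf n = x := by
  obtain ⟨y, hy⟩ := hx
  have hmem : x ∈ L c (Nat.pair x y + 1) := mem_L_of_c hy
  obtain ⟨i, hi, hix⟩ := List.getElem_of_mem hmem
  have hs : stage c hinf i ≤ Nat.pair x y + 1 := Nat.find_min' (hinf i) hi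
  refine ⟨i, ?_⟩
  rw [← getD_stable hs, List.getD_eq_getElem _ _ hi, hix]

theorem computable_fenum (hc : Computable c) : Computable (fenum c hinf) := by
  have hL : Computable (L c) := computable_L hc
  have hlen : Computable fun p : ℕ × ℕ => (L c p.2).length :=
    Primrec.list_length.to_comp.comp (hL.comp Computable.snd)
  have hdec : Computable fun p : ℕ × ℕ => decide (p.1 < (L c p.2).length) :=
    Primrec.nat_lt.decide.to_comp.comp Computable.fst hlen
  have hget : Computable fun p : ℕ × ℕ => some ((L c p.2).getD p.1 0) :=
    Computable.option_some.comp
      ((Primrec.list_getD 0).to_comp.comp (hL.comp Computable.snd) Computable.fst)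
  have hg : Computable₂ fun (n k : ℕ) =>
      cond (decide (n < (L c k).length)) (some ((L c k).getD n 0)) none :=
    (Computable.cond hdec hget (Computable.const none)).to₂
  have hpart : Partrec fun n => Nat.rfindOpt fun k =>
      cond (decide (n < (L c k).length)) (some ((L c k).getD n 0)) none :=
    Partrec.rfindOpt hg
  refine hpart.of_eq_tot fun n => ?_
  rw [Nat.rfindOpt_mono]
  · exact ⟨stage c hinf n, by
      simp only [lt_length_stage n, decide_true, cond_true, Option.mem_def,
        Option.some_inj]
      exact (getD_stable (le_refl _))⟩
  · intro a m k hmk ha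
    by_cases hm : n < (L c m).length
    · have hp : L c m <+: L c k := L_prefix hmk
      have hk : n < (L c k).length := lt_of_lt_of_le hm hp.length_le
      simp only [hm, decide_true, cond_true, Option.mem_def, Option.some_inj] at ha
      simp only [hk, decide_true, cond_true, Option.mem_def, Option.some_inj]
      rw [← ha, List.getD_eq_getElem _ _ hm, List.getD_eq_getElem _ _ hk]
      exact (hp.getElem hm).symm
    · simp only [hm, decide_false, cond_false] at ha
      cases ha

end Stmt14


open Stmt14

/-- Every computable graph has a computable copy in which the set of
isolated vertices is computable.  A computable graph is a graph on `ℕ` whose edge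
relation is computable; a computable copy is a computable graph isomorphic to it (the
isomorphism need not be computable). -/
theorem computable_copy_with_computable_isolated_set (G : SimpleGraph ℕ)
    (hG : ComputablePred fun p : ℕ × ℕ => G.Adj p.1 p.2) :
    ∃ H : SimpleGraph ℕ,
      ComputablePred (fun p : ℕ × ℕ => H.Adj p.1 p.2) ∧
      Nonempty (G ≃g H) ∧
      ComputablePred (fun x => ∀ y, ¬ H.Adj x y) := by
  classical
  by_cases hIfin : {x | ∀ y, ¬ G.Adj x y}.Finite
  · exact ⟨G, hG, ⟨SimpleGraph.Iso.refl⟩, Stmt14.computablePred_of_finite hIfin⟩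
  by_cases hSfin : {x | ∃ y, G.Adj x y}.Finite
  · refine ⟨G, hG, ⟨SimpleGraph.Iso.refl⟩, ?_⟩
    exact (Stmt14.computablePred_of_finite hSfin).not.of_eq fun x => by push_neg; rfl
  -- main case: both infinitely many isolated and infinitely many non-isolated vertices
  obtain ⟨c, hc, hcp⟩ := ComputablePred.computable_iff.1 hG
  have hadj : ∀ x y, G.Adj x y ↔ c (x, y) = true := fun x y =>
    iff_of_eq (congrFun hcp (x, y))
  have hSinf : {x | ∃ y, G.Adj x y}.Infinite := hSfin
  -- lengths of the lists L c k are unbounded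
  have hinf : ∀ n, ∃ k, n < (L c k).length := by
    intro n
    obtain ⟨T, hTsub, hTcard⟩ := hSinf.exists_subset_card_eq (n + 1)
    have hTk : ∀ x ∈ T, ∃ k, x ∈ L c k := by
      intro x hx
      obtain ⟨y, hy⟩ := hTsub hx
      exact ⟨Nat.pair x y + 1, mem_L_of_c ((hadj x y).1 hy)⟩
    choose! g hg using hTk
    refine ⟨T.sup g, ?_⟩
    have hsubl : ∀ x ∈ T, x ∈ L c (T.sup g) := by
      intro x hx
      exact (L_prefix (Finset.le_sup hx)).subset (hg x hx)
    have hTsub' : T ⊆ (L c (T.sup g)).toFinset := fun x hx =>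
      List.mem_toFinset.2 (hsubl x hx)
    have := Finset.card_le_card hTsub'
    rw [hTcard, List.toFinset_card_of_nodup (nodup_L _)] at this
    omega
  set f := fenum c hinf with hf_def
  have hf : Computable f := computable_fenum hc
  -- Sprop x ↔ x is non-isolated in G
  have hkey : ∀ x, (∃ n, f n = x) ↔ ∃ y, G.Adj x y := by
    intro x
    constructor
    · rintro ⟨n, rfl⟩
      obtain ⟨y, hy⟩ := fenum_spec (hinf := hinf) n
      exact ⟨y, (hadj _ y).2 hy⟩
    · rintro ⟨y, hy⟩
      exact fenum_surj ⟨y, (hadj x y).1 hy⟩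
  -- the new graph
  refine ⟨⟨fun x y => x % 2 = 1 ∧ y % 2 = 1 ∧ G.Adj (f (x / 2)) (f (y / 2)),
      ⟨fun x y h => ⟨h.2.1, h.1, h.2.2.symm⟩⟩,
      ⟨fun x h => G.loopless.irrefl _ h.2.2⟩⟩, ?_, ?_, ?_⟩
  · -- computability of the adjacency relation
    rw [ComputablePred.computable_iff]
    refine ⟨fun p => decide (p.1 % 2 = 1) && (decide (p.2 % 2 = 1) &&
      c (f (p.1 / 2), f (p.2 / 2))), ?_, ?_⟩
    · have h1 : Computable fun p : ℕ × ℕ => decide (p.1 % 2 = 1) :=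
        (Primrec.eq.decide.comp (Primrec.nat_mod.comp Primrec.fst (Primrec.const 2))
          (Primrec.const 1)).to_comp
      have h2 : Computable fun p : ℕ × ℕ => decide (p.2 % 2 = 1) :=
        (Primrec.eq.decide.comp (Primrec.nat_mod.comp Primrec.snd (Primrec.const 2))
          (Primrec.const 1)).to_comp
      have h3 : Computable fun p : ℕ × ℕ => c (f (p.1 / 2), f (p.2 / 2)) :=
        hc.comp (Computable.pair
          (hf.comp (Primrec.nat_div.comp Primrec.fst (Primrec.const 2)).to_comp)
          (hf.comp (Primrec.nat_div.comp Primrec.snd (Primrec.const 2)).to_comp))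
      exact Primrec.and.to_comp.comp h1 (Primrec.and.to_comp.comp h2 h3)
    · funext p
      simp only [Bool.and_eq_true, decide_eq_true_eq, eq_iff_iff]
      exact and_congr_right fun _ => and_congr_right fun _ => hadj _ _
  · -- the isomorphism
    haveI : Infinite ↥{x | ∀ y, ¬ G.Adj x y} := (Set.Infinite.to_subtype hIfin)
    haveI := Denumerable.ofEncodableOfInfinite ↥{x | ∀ y, ¬ G.Adj x y}
    let e : ↥{x | ∀ y, ¬ G.Adj x y} ≃ ℕ := Denumerable.eqv _
    have hmem : ∀ x, ¬(∃ n, f n = x) → x ∈ {x | ∀ y, ¬ G.Adj x y} := by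
      intro x hx y hy
      exact hx ((hkey x).2 ⟨y, hy⟩)
    let φ : ℕ → ℕ := fun x =>
      if h : ∃ n, f n = x then 2 * Nat.find h + 1 else 2 * e ⟨x, hmem x h⟩
    have hφS : ∀ x (h : ∃ n, f n = x), φ x = 2 * Nat.find h + 1 := fun x h => dif_pos h
    have hφI : ∀ x (h : ¬∃ n, f n = x), φ x = 2 * e ⟨x, hmem x h⟩ := fun x h => dif_neg h
    have hinj : Function.Injective φ := by
      intro x y hxy
      by_cases hx : ∃ n, f n = x <;> by_cases hy : ∃ n, f n = y
      · rw [hφS x hx, hφS y hy] at hxy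
        have : Nat.find hx = Nat.find hy := by omega
        rw [← Nat.find_spec hx, ← Nat.find_spec hy, this]
      · rw [hφS x hx, hφI y hy] at hxy; omega
      · rw [hφI x hx, hφS y hy] at hxy; omega
      · rw [hφI x hx, hφI y hy] at hxy
        have : e ⟨x, hmem x hx⟩ = e ⟨y, hmem y hy⟩ := by omega
        simpa using e.injective this
    have hsurj : Function.Surjective φ := by
      intro m
      rcases Nat.even_or_odd m with ⟨a, ha⟩ | ⟨a, ha⟩
      · refine ⟨(e.symm a : ℕ), ?_⟩
        have hx : ¬∃ n, f n = (e.symm a : ℕ) := by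
          intro h
          obtain ⟨y, hy⟩ := (hkey _).1 h
          exact (e.symm a).2 y hy
        rw [hφI _ hx]
        have : (⟨(e.symm a : ℕ), hmem _ hx⟩ : ↥{x | ∀ y, ¬ G.Adj x y}) = e.symm a :=
          Subtype.ext rfl
        rw [this, Equiv.apply_symm_apply]
        omega
      · refine ⟨f a, ?_⟩
        have hx : ∃ n, f n = f a := ⟨a, rfl⟩
        rw [hφS _ hx]
        have : Nat.find hx = a := fenum_inj (Nat.find_spec hx)
        omega
    have hodd_div : ∀ a : ℕ, (2 * a + 1) / 2 = a := by intro a; omega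
    refine ⟨⟨Equiv.ofBijective φ ⟨hinj, hsurj⟩, ?_⟩⟩
    intro a b
    show (φ a % 2 = 1 ∧ φ b % 2 = 1 ∧ G.Adj (f (φ a / 2)) (f (φ b / 2))) ↔ G.Adj a b
    by_cases ha : ∃ n, f n = a
    · by_cases hb : ∃ n, f n = b
      · rw [hφS a ha, hφS b hb]
        constructor
        · rintro ⟨-, -, h⟩
          rwa [hodd_div, hodd_div, Nat.find_spec ha, Nat.find_spec hb] at h
        · intro h
          refine ⟨by omega, by omega, ?_⟩
          rwa [hodd_div, hodd_div, Nat.find_spec ha, Nat.find_spec hb]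
      · constructor
        · rintro ⟨-, hb2, -⟩
          rw [hφI b hb] at hb2; omega
        · intro h
          exact absurd ((hkey b).2 ⟨a, h.symm⟩) hb
    · constructor
      · rintro ⟨ha2, -, -⟩
        rw [hφI a ha] at ha2; omega
      · intro h
        exact absurd ((hkey a).2 ⟨b, h⟩) ha
  · -- computability of the isolated-vertex set
    rw [ComputablePred.computable_iff]
    refine ⟨fun x => decide (x % 2 = 0), ?_, ?_⟩
    · exact (Primrec.eq.decide.comp (Primrec.nat_mod.comp Primrec.id (Primrec.const 2))
        (Primrec.const 0)).to_comp
    · funext x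
      simp only [decide_eq_true_eq, eq_iff_iff]
      constructor
      · intro hiso
        by_contra hx
        have hx1 : x % 2 = 1 := by omega
        obtain ⟨y, hy⟩ := fenum_spec (hinf := hinf) (x / 2)
        have hyS : ∃ y', c (y, y') = true :=
          ⟨f (x / 2), (hadj _ _).1 (((hadj _ _).2 hy).symm)⟩
        obtain ⟨b, hb⟩ := fenum_surj (hinf := hinf) hyS
        exact hiso (2 * b + 1) ⟨hx1, by omega, by
          rw [show (2 * b + 1) / 2 = b from by omega]
          rw [← hb] at hy
          exact (hadj _ _).2 hy⟩
      · intro hx y hy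
        omega
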